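/- Work with a finite oriented multigraph given by finite types V (vertices) and E (edges) together with maps s t : E → V, with V nonempty. Assume the multigraph has no loops and is connected. Let θ : Equiv.Perm V be a cyclic permutation of all the vertices (θ.IsCycle and θ.support = Finset.univ), let v = Fintype.card V, and let M : Matrix E E ℤ be a chain map over θ that is HTC. If k is a natural number such that v does not divide 2^k, then there exists an edge e : E with (M ^ (2^k)) e e < 0. -/

import Mathlib

/-- The boundary matrix of a finite oriented multigraph with source map `s`
and target map `t`: `∂ v e = [v = t e] - [v = s e]`. -/
def boundaryMatrix {V E : Type*} [DecidableEq V] (s t : E → V) : Matrix V E ℤ :=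
  fun v e => (if v = t e then 1 else 0) - (if v = s e then 1 else 0)

/-- The permutation matrix of `θ`: `P_θ u w = [u = θ w]`. -/
def permMatrix {V : Type*} [DecidableEq V] (θ : Equiv.Perm V) : Matrix V V ℤ :=
  fun u w => if u = θ w then 1 else 0

/-- `M` is a chain map over the vertex permutation `θ`: `∂ * M = P_θ * ∂`. -/
def IsChainMap {V E : Type*} [DecidableEq V] [Fintype V] [Fintype E]
    (s t : E → V) (θ : Equiv.Perm V) (M : Matrix E E ℤ) : Prop :=
  boundaryMatrix s t * M = permMatrix θ * boundaryMatrix s t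

/-- `M` is HTC (homotopic-to-a-constant-map condition): `M` annihilates the
cycle space, i.e. the kernel of the boundary matrix. -/
def IsHTC {V E : Type*} [DecidableEq V] [Fintype E]
    (s t : E → V) (M : Matrix E E ℤ) : Prop :=
  ∀ x : E → ℤ, (boundaryMatrix s t).mulVec x = 0 → M.mulVec x = 0

/-- The multigraph has no loops: `s e ≠ t e` for every edge. -/
def NoLoops {V E : Type*} (s t : E → V) : Prop :=
  ∀ e : E, s e ≠ t e

/-- The multigraph is connected: the smallest equivalence relation relating
`s e` and `t e` for every edge `e` is the total relation. -/
def IsConn {V E : Type*} (s t : E → V) : Prop :=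
  ∀ u v : V, Relation.EqvGen (fun a b => ∃ e : E, s e = a ∧ t e = b) u v

open scoped Matrix

section Aux

variable {V E : Type*} [Fintype V] [DecidableEq V] [Fintype E] [DecidableEq E]

lemma aux_matrix_ext_col {m n : Type*} [Fintype n] [DecidableEq n] (A B : Matrix m n ℤ)
    (h : ∀ j, A.mulVec (Pi.single j 1) = B.mulVec (Pi.single j 1)) : A = B := by
  ext i j
  have := congrFun (h j) i
  simpa using this

lemma aux_permMatrix_mul (θ σ : Equiv.Perm V) :
    permMatrix θ * permMatrix σ = permMatrix (θ * σ) := by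
  ext u w
  simp only [Matrix.mul_apply, permMatrix, mul_ite, mul_one, mul_zero, ite_mul, one_mul,
    zero_mul, Equiv.Perm.mul_apply]
  rw [Finset.sum_ite_eq' Finset.univ (σ w) (fun v => if u = θ v then (1:ℤ) else 0)]
  simp
  congr

lemma aux_permMatrix_pow (θ : Equiv.Perm V) (n : ℕ) :
    (permMatrix θ : Matrix V V ℤ) ^ n = permMatrix (θ ^ n) := by
  induction n with
  | zero =>
    ext u w
    simp [permMatrix, Matrix.one_apply]
  | succ n ih =>
    rw [pow_succ, pow_succ, ih, aux_permMatrix_mul]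

lemma aux_permMatrix_mulVec_single (σ : Equiv.Perm V) (u : V) :
    (permMatrix σ).mulVec (Pi.single u 1) = Pi.single (σ u) (1:ℤ) := by
  rw [Matrix.mulVec_single]
  ext i
  simp [permMatrix, Pi.single_apply]

lemma aux_boundary_mulVec_single (s t : E → V) (f : E) :
    (boundaryMatrix s t).mulVec (Pi.single f (1:ℤ)) =
      Pi.single (t f) 1 - Pi.single (s f) 1 := by
  rw [Matrix.mulVec_single]
  ext v
  simp [boundaryMatrix, Pi.single_apply]

lemma aux_conn_chain (s t : E → V) {u w : V}
    (h : Relation.EqvGen (fun a b => ∃ e : E, s e = a ∧ t e = b) u w) :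
    ∃ x : E → ℤ, (boundaryMatrix s t).mulVec x = Pi.single w 1 - Pi.single u 1 := by
  induction h with
  | rel a b hab =>
    obtain ⟨e, hs, ht⟩ := hab
    exact ⟨Pi.single e 1, by rw [aux_boundary_mulVec_single, hs, ht]⟩
  | refl a => exact ⟨0, by rw [Matrix.mulVec_zero, sub_self]⟩
  | symm a b _ ih =>
    obtain ⟨x, hx⟩ := ih
    exact ⟨-x, by rw [Matrix.mulVec_neg, hx, neg_sub]⟩
  | trans a b c _ _ ih1 ih2 =>
    obtain ⟨x, hx⟩ := ih1
    obtain ⟨y, hy⟩ := ih2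
    refine ⟨x + y, by rw [Matrix.mulVec_add, hx, hy]; abel⟩

lemma aux_kill_cols (s t : E → V) (hconn : IsConn s t) (C : Matrix V V ℤ)
    (hC : C * boundaryMatrix s t = 0) (u w : V) :
    C.mulVec (Pi.single u 1 - Pi.single w 1) = 0 := by
  obtain ⟨x, hx⟩ := aux_conn_chain s t (hconn w u)
  rw [← hx, Matrix.mulVec_mulVec, hC, Matrix.zero_mulVec]

end Aux

theorem exists_neg_diagonal_entry_pow_two_pow
    {V E : Type*} [Fintype V] [DecidableEq V] [Fintype E] [DecidableEq E] [Nonempty V]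
    (s t : E → V) (hloop : NoLoops s t) (hconn : IsConn s t)
    (θ : Equiv.Perm V) (hcyc : θ.IsCycle) (hsupp : θ.support = Finset.univ)
    (M : Matrix E E ℤ) (hM : IsChainMap s t θ M) (hMhtc : IsHTC s t M)
    (k : ℕ) (hk : ¬ (Fintype.card V ∣ 2 ^ k)) :
    ∃ e : E, (M ^ (2 ^ k)) e e < 0 := by
  classical
  set D : Matrix V E ℤ := boundaryMatrix s t with hD
  set P : Matrix V V ℤ := permMatrix θ with hP
  obtain ⟨v0⟩ : Nonempty V := inferInstance
  -- chains from v0 to each vertex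
  choose x hx using fun u => aux_conn_chain s t (hconn v0 u)
  -- the matrix N with M = N * D
  set N : Matrix E V ℤ := Matrix.of (fun e u => (M.mulVec (x u)) e) with hN
  have hNsingle : ∀ u : V, N.mulVec (Pi.single u 1) = M.mulVec (x u) := by
    intro u
    rw [Matrix.mulVec_single]
    funext e
    simp [hN]
  have hMN : M = N * D := by
    apply aux_matrix_ext_col
    intro f
    have h0 : M.mulVec (x (t f) - x (s f) - Pi.single f 1) = 0 := by
      apply hMhtc
      rw [Matrix.mulVec_sub, Matrix.mulVec_sub, hx, hx, aux_boundary_mulVec_single]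
      abel
    have hr : (N * D).mulVec (Pi.single f 1)
        = M.mulVec (x (t f)) - M.mulVec (x (s f)) := by
      rw [← Matrix.mulVec_mulVec, hD, aux_boundary_mulVec_single, Matrix.mulVec_sub,
        hNsingle, hNsingle]
    rw [hr]
    rw [Matrix.mulVec_sub, Matrix.mulVec_sub, sub_eq_zero] at h0
    exact h0.symm
  set B : Matrix V V ℤ := D * N with hB
  have hBD : B * D = P * D := by
    calc B * D = D * (N * D) := by rw [hB, Matrix.mul_assoc]
      _ = D * M := by rw [← hMN]
      _ = P * D := hM
  have hsub : (B - P) * D = 0 := by rw [Matrix.sub_mul, hBD, sub_self]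
  -- B^n D = P^n D
  have H : ∀ n : ℕ, B ^ n * D = P ^ n * D := by
    intro n
    induction n with
    | zero => simp
    | succ n ih =>
      have key : (B - P) * (P ^ n * D) = 0 := by
        rw [aux_permMatrix_pow]
        apply aux_matrix_ext_col
        intro f
        rw [Matrix.zero_mulVec, ← Matrix.mulVec_mulVec, ← Matrix.mulVec_mulVec,
          hD, aux_boundary_mulVec_single, Matrix.mulVec_sub,
          aux_permMatrix_mulVec_single, aux_permMatrix_mulVec_single]
        exact aux_kill_cols s t hconn _ hsub _ _
      rw [Matrix.sub_mul, sub_eq_zero] at key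
      calc B ^ (n+1) * D = B * (B ^ n * D) := by rw [pow_succ', Matrix.mul_assoc]
        _ = B * (P ^ n * D) := by rw [ih]
        _ = P * (P ^ n * D) := key
        _ = P ^ (n+1) * D := by rw [pow_succ', Matrix.mul_assoc]
  -- write 2^k = m + 1
  have h1 : 1 ≤ 2 ^ k := Nat.one_le_two_pow
  obtain ⟨m, hm⟩ : ∃ m, 2 ^ k = m + 1 := ⟨2 ^ k - 1, by omega⟩
  -- trace of M^n equals trace of B^n
  have hMpow : ∀ m : ℕ, M ^ (m + 1) = N * (B ^ m * D) := by
    intro m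
    induction m with
    | zero => rw [zero_add, pow_one, pow_zero, Matrix.one_mul]; exact hMN
    | succ m ih =>
      rw [pow_succ, ih, hMN, pow_succ, hB]
      simp only [Matrix.mul_assoc]
  have htr1 : (M ^ (2 ^ k)).trace = (B ^ (2 ^ k)).trace := by
    rw [hm, hMpow m, Matrix.trace_mul_comm, Matrix.mul_assoc, ← hB, ← pow_succ]
  -- the difference matrix has equal columns and column sums -1
  have hAD : (B ^ (2 ^ k) - P ^ (2 ^ k)) * D = 0 := by
    rw [Matrix.sub_mul, H, sub_self]
  have hcols : ∀ u w w', (B ^ (2 ^ k) - P ^ (2 ^ k)) u w = (B ^ (2 ^ k) - P ^ (2 ^ k)) u w' := by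
    intro u w w'
    have h := congrFun (aux_kill_cols s t hconn _ hAD w w') u
    simpa [Matrix.mulVec_sub, sub_eq_zero] using h
  have hoD : (fun _ => (1:ℤ)) ᵥ* D = 0 := by
    funext e
    simp [hD, Matrix.vecMul, dotProduct, boundaryMatrix, Finset.sum_sub_distrib]
  have hoB : (fun _ => (1:ℤ)) ᵥ* B = 0 := by
    rw [hB, ← Matrix.vecMul_vecMul, hoD, Matrix.zero_vecMul]
  have hoBn : (fun _ => (1:ℤ)) ᵥ* (B ^ (2 ^ k)) = 0 := by
    rw [hm, pow_succ', ← Matrix.vecMul_vecMul, hoB, Matrix.zero_vecMul]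
  have hoPn : (fun _ => (1:ℤ)) ᵥ* (P ^ (2 ^ k)) = fun _ => 1 := by
    rw [hP, aux_permMatrix_pow]
    funext w
    simp [Matrix.vecMul, dotProduct, permMatrix]
  have hsum : ∑ u, (B ^ (2 ^ k) - P ^ (2 ^ k)) u v0 = -1 := by
    have h1' : (fun _ => (1:ℤ)) ᵥ* (B ^ (2 ^ k) - P ^ (2 ^ k)) = fun _ => -1 := by
      rw [Matrix.vecMul_sub, hoBn, hoPn]
      funext w
      simp
    have h2 := congrFun h1' v0
    simpa [Matrix.vecMul, dotProduct] using h2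
  have htrA : (B ^ (2 ^ k) - P ^ (2 ^ k)).trace = -1 := by
    have heq : ∀ u ∈ Finset.univ, (B ^ (2 ^ k) - P ^ (2 ^ k)) u u
        = (B ^ (2 ^ k) - P ^ (2 ^ k)) u v0 := fun u _ => hcols u u v0
    simp only [Matrix.trace, Matrix.diag]
    exact (Finset.sum_congr rfl heq).trans hsum
  -- no fixed points of θ^(2^k)
  have hfix : ∀ w : V, (θ ^ (2 ^ k)) w ≠ w := by
    intro w hw
    have hco : θ.IsCycleOn (θ.support : Set V) := by
      have := hcyc.isCycleOn
      rwa [← Equiv.Perm.coe_support_eq_set_support] at this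
    have hd := (hco.pow_apply_eq (a := w) (by rw [hsupp]; exact Finset.mem_univ w)).mp hw
    rw [hsupp, Finset.card_univ] at hd
    exact hk hd
  have htrP : (P ^ (2 ^ k)).trace = 0 := by
    rw [hP, aux_permMatrix_pow]
    simp only [Matrix.trace, Matrix.diag, permMatrix]
    refine Finset.sum_eq_zero fun w _ => ?_
    rw [if_neg]
    exact fun h => hfix w h.symm
  have htrB : (B ^ (2 ^ k)).trace = -1 := by
    have h' := htrA
    rw [Matrix.trace_sub, htrP, sub_zero] at h'
    exact h'
  have htrM : (M ^ (2 ^ k)).trace = -1 := htr1.trans htrB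
  by_contra hcon
  push_neg at hcon
  have hnn : (0:ℤ) ≤ (M ^ (2 ^ k)).trace := by
    rw [Matrix.trace]
    exact Finset.sum_nonneg fun e _ => hcon e
  rw [htrM] at hnn
  omega
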